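/- Let λ = (λ₁ ≥ λ₂ ≥ ... ≥ λ_t) be a partition of 2r in which every odd part occurs an even number of times (a C-partition). Let (ξ, η) = φ_C(λ) be the ordered pair of partitions with |ξ| + |η| = r attached to λ by the type-C symbol procedure. Then: (i) if λ₁ is odd, then L(η) = (λ₁+1)/2; (ii) if λ₁ is even, then L(ξ) = λ₁/2; (iii) if λ₁ is even and λ₂ = λ₁, then L(ξ) = L(η) = λ₁/2. -/

import Mathlib

/-!
STATEMENT 7: Properties of the type-C symbol map `φ_C`.  A partition `l` of `2r`
(weakly decreasing list of positive integers) in which every odd part occurs an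
even number of times is sent to the ordered pair of partitions `(ξ, η)` by:
padding to even length, forming `λ*_i = λ_i + (i-1)` (increasing order), splitting
into odd entries `2y+1` (giving ξ) and even entries `2x` (giving η), and
subtracting staircases.  Claims (with `L` = largest part, `λ₁ = l.headD 0`,
`λ₂ = l.getD 1 0`):
|ξ| + |η| = r; (i) λ₁ odd ⇒ L(η) = (λ₁+1)/2; (ii) λ₁ even ⇒ L(ξ) = λ₁/2;
(iii) λ₁ even and λ₂ = λ₁ ⇒ L(ξ) = L(η) = λ₁/2.
-/

namespace Stmt7

/-- Largest part of a partition given as a list. -/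
def Lp (l : List ℕ) : ℕ := l.foldr max 0

/-- Pad a (decreasing) partition with a trailing zero to make its length even. -/
def padEven (l : List ℕ) : List ℕ := if Even l.length then l else l ++ [0]

/-- `λ*`: read the padded partition in increasing order and add `(i-1)`. -/
def starSeq (l : List ℕ) : List ℕ :=
  List.zipWith (· + ·) l.reverse (List.range l.length)

/-- Halves of the even entries (`2x ↦ x`), in increasing order. -/
def evenHalves (s : List ℕ) : List ℕ := (s.filter (fun x => x % 2 = 0)).map (· / 2)

/-- Halves of the odd entries (`2y+1 ↦ y`), in increasing order. -/
def oddHalves (s : List ℕ) : List ℕ := (s.filter (fun x => x % 2 = 1)).map (· / 2)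

/-- Subtract the staircase `(0,1,2,…)` from an increasing sequence. -/
def unstair (s : List ℕ) : List ℕ :=
  List.zipWith (fun a i => a - i) s (List.range s.length)

/-- First member of the ordered pair `φ_C(l)`. -/
def xiC (l : List ℕ) : List ℕ := unstair (oddHalves (starSeq (padEven l)))

/-- Second member of the ordered pair `φ_C(l)`. -/
def etaC (l : List ℕ) : List ℕ := unstair (evenHalves (starSeq (padEven l)))

open List in
open List

def S (c : ℕ) : List ℕ → List ℕ
  | [] => []
  | a :: t => (a + c) :: S (c + 1) t

def U (c : ℕ) : List ℕ → List ℕ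
  | [] => []
  | a :: t => (a - c) :: U (c + 1) t

@[simp] lemma S_nil (c : ℕ) : S c [] = [] := rfl
@[simp] lemma S_cons (c a : ℕ) (t : List ℕ) : S c (a :: t) = (a + c) :: S (c+1) t := rfl
@[simp] lemma U_nil (c : ℕ) : U c [] = [] := rfl
@[simp] lemma U_cons (c a : ℕ) (t : List ℕ) : U c (a :: t) = (a - c) :: U (c+1) t := rfl

@[simp] lemma S_length (c : ℕ) (q : List ℕ) : (S c q).length = q.length := by
  induction q generalizing c with
  | nil => rfl
  | cons a t ih => simp [ih]

@[simp] lemma U_length (c : ℕ) (q : List ℕ) : (U c q).length = q.length := by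
  induction q generalizing c with
  | nil => rfl
  | cons a t ih => simp [ih]

lemma S_eq_zip (q : List ℕ) (c : ℕ) :
    S c q = List.zipWith (fun a i => a + (c + i)) q (List.range q.length) := by
  induction q generalizing c with
  | nil => rfl
  | cons a t ih =>
    rw [List.length_cons, List.range_succ_eq_map, List.zipWith_cons_cons,
      List.zipWith_map_right]
    have : (fun a i => a + (c + Nat.succ i)) = (fun a i => a + ((c+1) + i)) := by
      funext x y; omega
    simp only [S_cons, this, ← ih, Nat.add_zero]

lemma U_eq_zip (q : List ℕ) (c : ℕ) :
    U c q = List.zipWith (fun a i => a - (c + i)) q (List.range q.length) := by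
  induction q generalizing c with
  | nil => rfl
  | cons a t ih =>
    rw [List.length_cons, List.range_succ_eq_map, List.zipWith_cons_cons,
      List.zipWith_map_right]
    have : (fun a i => a - (c + Nat.succ i)) = (fun a i => a - ((c+1) + i)) := by
      funext x y; omega
    simp only [U_cons, this, ← ih, Nat.add_zero]


lemma S_lb (q : List ℕ) (hq : q.Pairwise (· ≤ ·)) (c b : ℕ) (hb : ∀ y ∈ q, b ≤ y) :
    ∀ x ∈ S c q, b + c ≤ x := by
  induction q generalizing c b with
  | nil => simp
  | cons a t ih =>
    intro x hx
    rcases List.mem_cons.1 hx with h | h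
    · have := hb a (by simp); omega
    · have := ih hq.of_cons (c+1) b (fun y hy => hb y (List.mem_cons_of_mem _ hy)) x h
      omega

lemma S_sorted (q : List ℕ) (hq : q.Pairwise (· ≤ ·)) (c : ℕ) : (S c q).Pairwise (· < ·) := by
  induction q generalizing c with
  | nil => simp
  | cons a t ih =>
    refine List.Pairwise.cons ?_ (ih hq.of_cons (c+1))
    intro x hx
    have := S_lb t hq.of_cons (c+1) a (fun y hy => List.rel_of_pairwise_cons hq hy) x hx
    omega

lemma getLastD_irrel (l : List ℕ) (h : l ≠ []) (d : ℕ) : l.getLastD d = l.getLastD 0 := by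
  cases l with
  | nil => exact absurd rfl h
  | cons b t => rw [List.getLastD_cons, List.getLastD_cons]

lemma S_sum (q : List ℕ) (c : ℕ) :
    (S c q).sum = q.sum + q.length * c + (List.range q.length).sum := by
  induction q generalizing c with
  | nil => simp
  | cons a t ih =>
    rw [List.length_cons, List.range_succ, List.sum_append]
    simp only [S_cons, List.sum_cons, ih (c+1), List.sum_nil, Nat.mul_succ, Nat.succ_mul]
    omega

lemma U_sum (q : List ℕ) (hq : q.Pairwise (· < ·)) (c : ℕ) (hb : ∀ y ∈ q, c ≤ y) :
    (U c q).sum + q.length * c + (List.range q.length).sum = q.sum := by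
  induction q generalizing c with
  | nil => simp
  | cons a t ih =>
    rw [List.length_cons, List.range_succ, List.sum_append]
    have hac : c ≤ a := hb a (by simp)
    have hb' : ∀ y ∈ t, c + 1 ≤ y := by
      intro y hy
      have := List.rel_of_pairwise_cons hq hy; omega
    have := ih hq.of_cons (c+1) hb'
    simp only [U_cons, List.sum_cons, List.sum_nil, Nat.mul_succ, Nat.succ_mul] at *
    omega

lemma S_getLastD (q : List ℕ) (hq : q ≠ []) (c : ℕ) :
    (S c q).getLastD 0 = q.getLastD 0 + c + (q.length - 1) := by
  induction q generalizing c with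
  | nil => simp at hq
  | cons a t ih =>
    cases t with
    | nil => simp [S]
    | cons b t' =>
      have hne : (S (c+1) (b :: t')) ≠ [] := by simp [S]
      rw [S_cons, List.getLastD_cons, getLastD_irrel _ hne, ih (by simp) (c+1)]
      simp only [List.getLastD_cons, List.length_cons]
      omega

lemma S_dropLast (q : List ℕ) (c : ℕ) : (S c q).dropLast = S c q.dropLast := by
  induction q generalizing c with
  | nil => rfl
  | cons a t ih =>
    cases t with
    | nil => rfl
    | cons b t' =>
      have hne : (S (c+1) (b :: t')) ≠ [] := by simp [S]
      rw [S_cons, List.dropLast_cons_of_ne_nil hne, ih (c+1), List.dropLast_cons₂]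
      cases h : (b :: t').dropLast with
      | nil => simp [S]
      | cons x y => rfl

lemma sorted_lt_head_getLast (q : List ℕ) (hq : q.Pairwise (· < ·)) (h : q ≠ []) :
    q.headD 0 + (q.length - 1) ≤ q.getLastD 0 := by
  induction q with
  | nil => simp at h
  | cons a t ih =>
    cases t with
    | nil => simp
    | cons b t' =>
      have h1 : a < b := List.rel_of_pairwise_cons hq (by simp)
      have := ih hq.of_cons (by simp)
      simp only [List.getLastD_cons, List.headD_cons, List.length_cons] at *
      omega

lemma U_Lp (q : List ℕ) (hq : q.Pairwise (· < ·)) (h : q ≠ []) (c : ℕ) :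
    (U c q).foldr max 0 = q.getLastD 0 - (c + (q.length - 1)) := by
  induction q generalizing c with
  | nil => simp at h
  | cons a t ih =>
    cases t with
    | nil => simp [U]
    | cons b t' =>
      have hlast : b + ((b :: t').length - 1) ≤ (b :: t').getLastD 0 :=
        sorted_lt_head_getLast _ hq.of_cons (by simp)
      have hab : a < b := List.rel_of_pairwise_cons hq (by simp)
      rw [U_cons, List.foldr_cons, ih hq.of_cons (by simp) (c+1)]
      simp only [List.getLastD_cons, List.length_cons] at *
      omega


lemma S_succ (c : ℕ) (q : List ℕ) : S (c+1) q = (S c q).map (· + 1) := by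
  induction q generalizing c with
  | nil => rfl
  | cons a t ih => simp only [S_cons, List.map_cons, ih (c+1)]; rfl

lemma countP_parity (L : List ℕ) :
    L.countP (fun x => x % 2 = 0) + L.countP (fun x => x % 2 = 1) = L.length := by
  induction L with
  | nil => rfl
  | cons a t ih =>
    simp only [List.countP_cons, List.length_cons]
    rcases Nat.mod_two_eq_zero_or_one a with h | h <;> simp [h] <;> omega

lemma countP_shift1 (L : List ℕ) :
    (L.map (· + 1)).countP (fun x => x % 2 = 1) = L.countP (fun x => x % 2 = 0) := by
  rw [List.countP_map]
  congr 1
  funext x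
  simp only [Function.comp_apply, decide_eq_decide]
  omega

lemma countA : ∀ (n : ℕ) (q : List ℕ), q.length = n → q.Pairwise (· ≤ ·) →
    (∀ k : ℕ, k % 2 = 1 → q.count k % 2 = 0) →
    (S 0 q).countP (fun x => x % 2 = 1) = n / 2 := by
  intro n
  induction n using Nat.strong_induction_on with
  | _ n ih =>
    intro q hlen hq hcnt
    match q, hlen with
    | [], rfl => rfl
    | a :: t, rfl =>
      rcases Nat.mod_two_eq_zero_or_one a with ha | ha
      · -- even head
        have hcnt' : ∀ k : ℕ, k % 2 = 1 → t.count k % 2 = 0 := by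
          intro k hk
          have := hcnt k hk
          rw [List.count_cons] at this
          have hak : ¬ (a = k) := by intro h; omega
          simpa [hak] using this
        have iht := ih t.length (by simp) t rfl hq.of_cons hcnt'
        have h1 : (S 0 (a :: t)).countP (fun x => x % 2 = 1)
            = (S 0 t).countP (fun x => x % 2 = 0) := by
          rw [show S 0 (a :: t) = a :: S 1 t from rfl, List.countP_cons,
            show (1:ℕ) = 0 + 1 from rfl, S_succ, countP_shift1]
          simp [ha]
        have h2 := countP_parity (S 0 t)
        rw [S_length] at h2
        simp only [List.length_cons]
        omega
      · -- odd head
        have hmem : a ∈ t := by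
          have := hcnt a ha
          rw [List.count_cons_self] at this
          have : t.count a ≥ 1 := by omega
          exact List.count_pos_iff.mp (by omega)
        match t, hmem with
        | b :: t', hmem =>
          have hab : a = b := by
            have h1 : a ≤ b := List.rel_of_pairwise_cons hq (by simp)
            have h2 : b ≤ a := by
              rcases List.mem_cons.1 hmem with h | h
              · omega
              · exact List.rel_of_pairwise_cons hq.of_cons h
            omega
          subst hab
          have hcnt' : ∀ k : ℕ, k % 2 = 1 → t'.count k % 2 = 0 := by
            intro k hk
            have := hcnt k hk
            simp only [List.count_cons] at this
            by_cases hak : a = k <;> simp [hak] at this <;> omega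
          have iht := ih t'.length (by simp) t' rfl hq.of_cons.of_cons hcnt'
          have hS : S 0 (a :: a :: t') = a :: (a + 1) :: ((S 0 t').map (· + 1)).map (· + 1) := by
            rw [show S 0 (a :: a :: t') = a :: (a + 0 + 1) :: S 2 t' from rfl]
            rw [show (2:ℕ) = 1 + 1 from rfl, S_succ, show (1:ℕ) = 0 + 1 from rfl, S_succ]
          rw [hS, List.countP_cons, List.countP_cons, countP_shift1]
          have h2 := countP_parity (S 0 t')
          rw [S_length] at h2
          have h3 : (((S 0 t').map (· + 1)).countP fun x => x % 2 = 0)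
              = (S 0 t').countP (fun x => x % 2 = 1) := by
            rw [List.countP_map]
            congr 1
            funext x
            simp only [Function.comp_apply, decide_eq_decide]
            omega
          rw [h3, iht]
          have : (a + 1) % 2 = 0 := by omega
          simp only [List.length_cons, ha, this]
          simp
          omega


lemma halves_sorted (L : List ℕ) (hL : L.Pairwise (· < ·)) (e : ℕ)
    (hpar : ∀ x ∈ L, x % 2 = e) : (L.map (· / 2)).Pairwise (· < ·) := by
  rw [List.pairwise_map]
  refine hL.imp_of_mem ?_
  intro a b ha hb hab
  have h1 := hpar a ha
  have h2 := hpar b hb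
  omega

lemma sum_halves_even (L : List ℕ) (hpar : ∀ x ∈ L, x % 2 = 0) :
    2 * (L.map (· / 2)).sum = L.sum := by
  induction L with
  | nil => rfl
  | cons a t ih =>
    have := hpar a (by simp)
    have := ih (fun x hx => hpar x (by simp [hx]))
    simp only [List.map_cons, List.sum_cons]
    omega

lemma sum_halves_odd (L : List ℕ) (hpar : ∀ x ∈ L, x % 2 = 1) :
    2 * (L.map (· / 2)).sum + L.length = L.sum := by
  induction L with
  | nil => rfl
  | cons a t ih =>
    have := hpar a (by simp)
    have := ih (fun x hx => hpar x (by simp [hx]))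
    simp only [List.map_cons, List.sum_cons, List.length_cons]
    omega

lemma map_getLastD (f : ℕ → ℕ) (L : List ℕ) (h : L ≠ []) :
    (L.map f).getLastD 0 = f (L.getLastD 0) := by
  induction L with
  | nil => exact absurd rfl h
  | cons a t ih =>
    cases t with
    | nil => rfl
    | cons b t' =>
      rw [List.map_cons, List.getLastD_cons, List.getLastD_cons,
        getLastD_irrel _ (by simp) (f a), getLastD_irrel _ (by simp) a, ih (by simp)]

lemma filter_last_true (p : ℕ → Bool) (L : List ℕ) (h : L ≠ []) (hp : p (L.getLastD 0) = true) :
    (L.filter p).getLastD 0 = L.getLastD 0 := by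
  have hx : L.getLast h = L.getLastD 0 := by
    cases L with
    | nil => exact absurd rfl h
    | cons a t => rw [List.getLast_eq_getLastD, List.getLastD_cons]
  conv_lhs => rw [← List.dropLast_concat_getLast h]
  rw [List.filter_append, hx]
  simp only [List.filter_cons, hp, List.filter_nil, if_true]
  rw [List.getLastD_concat]

lemma filter_last_false (p : ℕ → Bool) (L : List ℕ) (h : L ≠ []) (hp : p (L.getLastD 0) = false) :
    L.filter p = L.dropLast.filter p := by
  have hx : L.getLast h = L.getLastD 0 := by
    cases L with
    | nil => exact absurd rfl h
    | cons a t => rw [List.getLast_eq_getLastD, List.getLastD_cons]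
  conv_lhs => rw [← List.dropLast_concat_getLast h]
  rw [List.filter_append, hx]
  simp only [List.filter_cons, hp, List.filter_nil, if_false]
  simp

lemma sum_filter_parity (L : List ℕ) :
    (L.filter (fun x => x % 2 = 1)).sum + (L.filter (fun x => x % 2 = 0)).sum = L.sum := by
  induction L with
  | nil => rfl
  | cons a t ih =>
    simp only [List.filter_cons]
    rcases Nat.mod_two_eq_zero_or_one a with h | h <;> simp [h] <;> omega

lemma range_sum_double (m : ℕ) :
    (List.range (2 * m)).sum = 4 * (List.range m).sum + m := by
  induction m with
  | zero => rfl
  | succ k ih =>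
    rw [show 2 * (k + 1) = (2*k) + 1 + 1 from rfl, List.range_succ, List.range_succ,
      List.sum_append, List.sum_append, ih, List.range_succ, List.sum_append]
    simp
    omega


lemma reverse_dropLast (p : List ℕ) : p.reverse.dropLast = p.tail.reverse := by
  cases p with
  | nil => rfl
  | cons a t => rw [List.reverse_cons, List.dropLast_concat, List.tail_cons]

lemma reverse_getLastD (p : List ℕ) : p.reverse.getLastD 0 = p.headD 0 := by
  simp [List.getLastD_eq_getLast?, List.getLast?_reverse]

lemma tail_headD (p : List ℕ) : p.tail.headD 0 = p.getD 1 0 := by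
  cases p with
  | nil => rfl
  | cons a t => cases t <;> rfl


theorem stmt7 (r : ℕ) (hr : 0 < r) (l : List ℕ)
    (hsort : l.Pairwise (· ≥ ·))
    (hpos : ∀ x ∈ l, 0 < x)
    (hsum : l.sum = 2 * r)
    (hC : ∀ k : ℕ, Odd k → Even (l.count k)) :
    ((xiC l).sum + (etaC l).sum = r) ∧
    (Odd (l.headD 0) → Lp (etaC l) = (l.headD 0 + 1) / 2) ∧
    (Even (l.headD 0) → Lp (xiC l) = l.headD 0 / 2) ∧
    (Even (l.headD 0) → l.getD 1 0 = l.headD 0 →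
      Lp (xiC l) = l.headD 0 / 2 ∧ Lp (etaC l) = l.headD 0 / 2) := by
  classical
  have hlne : l ≠ [] := by
    rintro rfl; simp at hsum; omega
  obtain ⟨p, hp_def⟩ : ∃ p, padEven l = p := ⟨_, rfl⟩
  have hpd : p = l ∨ p = l ++ [0] := by
    rw [← hp_def, padEven]; split <;> simp
  have hp_ne : p ≠ [] := by
    rcases hpd with h | h <;> rw [h] <;> simp [hlne]
  have hp_sorted : p.Pairwise (· ≥ ·) := by
    rcases hpd with h | h <;> rw [h]
    · exact hsort
    · rw [List.pairwise_append]
      refine ⟨hsort, by simp, by simp⟩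
  have hp_sum : p.sum = 2 * r := by
    rcases hpd with h | h <;> rw [h] <;> simp [hsum]
  have hp_cnt : ∀ k : ℕ, k % 2 = 1 → p.count k % 2 = 0 := by
    intro k hk
    have h0 := (Nat.even_iff).1 (hC k (Nat.odd_iff.2 hk))
    have hk0 : k ≠ 0 := by omega
    have hc0 : List.count k [0] = 0 := by
      rw [List.count_eq_zero]; simp; omega
    rcases hpd with h | h <;> rw [h]
    · exact h0
    · rw [List.count_append, hc0]; omega
  have hp_len : p.length % 2 = 0 := by
    rw [← hp_def, padEven]; split <;> rename_i h
    · exact Nat.even_iff.1 h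
    · rw [List.length_append]
      have := Nat.even_iff.not.1 h
      simp at this ⊢
      omega
  have hp_head : p.headD 0 = l.headD 0 := by
    rcases hpd with h | h <;> rw [h]
    cases l with
    | nil => exact absurd rfl hlne
    | cons a t => rw [List.cons_append, List.headD_cons, List.headD_cons]
  obtain ⟨lam, hlam⟩ : ∃ x, l.headD 0 = x := ⟨_, rfl⟩
  rw [hlam] at hp_head
  obtain ⟨m, hm⟩ : ∃ m, p.length = 2 * m := ⟨p.length / 2, by omega⟩
  have hm1 : 1 ≤ m := by
    have : 0 < p.length := List.length_pos_iff.2 hp_ne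
    omega
  have hq_sorted : p.reverse.Pairwise (· ≤ ·) := by
    rw [List.pairwise_reverse]
    exact hp_sorted
  have hq_ne : p.reverse ≠ [] := by simp [hp_ne]
  have hq_len : p.reverse.length = 2 * m := by rw [List.length_reverse, hm]
  have hq_cnt : ∀ k : ℕ, k % 2 = 1 → p.reverse.count k % 2 = 0 := by
    intro k hk; rw [List.count_reverse]; exact hp_cnt k hk
  have hq_sum : p.reverse.sum = 2 * r := by rw [List.sum_reverse, hp_sum]
  have hq_last : p.reverse.getLastD 0 = lam := by
    rw [reverse_getLastD, hp_head]
  -- the star sequence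
  have hstar : starSeq p = S 0 p.reverse := by
    have hfn : (fun (a i : ℕ) => a + (0 + i)) = (· + ·) := by funext a i; omega
    rw [starSeq, S_eq_zip, hfn, List.length_reverse]
  have hun : ∀ X : List ℕ, unstair X = U 0 X := by
    intro X
    have hfn : (fun (a i : ℕ) => a - (0 + i)) = (fun a i => a - i) := by funext a i; omega
    rw [unstair, U_eq_zip, hfn]
  have hs_sorted : (S 0 p.reverse).Pairwise (· < ·) := S_sorted _ hq_sorted 0
  have hs_len : (S 0 p.reverse).length = 2 * m := by rw [S_length, hq_len]
  have hs_ne : (S 0 p.reverse) ≠ [] := by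
    intro h; rw [h] at hs_len; simp at hs_len; omega
  have hs_last : (S 0 p.reverse).getLastD 0 = lam + (2 * m - 1) := by
    rw [S_getLastD _ hq_ne, hq_last, hq_len]; omega
  -- the two filtered lists
  obtain ⟨fo, hfo⟩ : ∃ fo, (S 0 p.reverse).filter (fun x => x % 2 = 1) = fo := ⟨_, rfl⟩
  obtain ⟨fe, hfe⟩ : ∃ fe, (S 0 p.reverse).filter (fun x => x % 2 = 0) = fe := ⟨_, rfl⟩
  have hfo_len : fo.length = m := by
    rw [← hfo, ← List.countP_eq_length_filter,
      countA (2 * m) p.reverse hq_len hq_sorted hq_cnt]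
    omega
  have hfe_len : fe.length = m := by
    have h2 := countP_parity (S 0 p.reverse)
    rw [hs_len] at h2
    rw [← hfe, ← List.countP_eq_length_filter]
    have h3 : (S 0 p.reverse).countP (fun x => x % 2 = 1) = m := by
      rw [countA (2 * m) p.reverse hq_len hq_sorted hq_cnt]; omega
    omega
  have hfo_sorted : fo.Pairwise (· < ·) := by
    rw [← hfo]; exact hs_sorted.sublist List.filter_sublist
  have hfe_sorted : fe.Pairwise (· < ·) := by
    rw [← hfe]; exact hs_sorted.sublist List.filter_sublist
  have hfo_par : ∀ x ∈ fo, x % 2 = 1 := by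
    intro x hx; rw [← hfo] at hx
    simpa using List.of_mem_filter hx
  have hfe_par : ∀ x ∈ fe, x % 2 = 0 := by
    intro x hx; rw [← hfe] at hx
    simpa using List.of_mem_filter hx
  -- the halves
  obtain ⟨O, hO⟩ : ∃ O, fo.map (· / 2) = O := ⟨_, rfl⟩
  obtain ⟨E, hE⟩ : ∃ E, fe.map (· / 2) = E := ⟨_, rfl⟩
  have hO_len : O.length = m := by rw [← hO, List.length_map, hfo_len]
  have hE_len : E.length = m := by rw [← hE, List.length_map, hfe_len]
  have hO_sorted : O.Pairwise (· < ·) := by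
    rw [← hO]; exact halves_sorted fo hfo_sorted 1 hfo_par
  have hE_sorted : E.Pairwise (· < ·) := by
    rw [← hE]; exact halves_sorted fe hfe_sorted 0 hfe_par
  have hO_ne : O ≠ [] := by intro h; rw [h] at hO_len; simp at hO_len; omega
  have hE_ne : E ≠ [] := by intro h; rw [h] at hE_len; simp at hE_len; omega
  have hxiC : xiC l = U 0 O := by
    rw [xiC, hp_def, hstar, ← hun]
    rw [oddHalves, hfo, hO]
  have hetaC : etaC l = U 0 E := by
    rw [etaC, hp_def, hstar, ← hun]
    rw [evenHalves, hfe, hE]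
  -- part 1 : sums
  have part1 : (xiC l).sum + (etaC l).sum = r := by
    have hOsum : 2 * O.sum + m = fo.sum := by
      rw [← hO, ← hfo_len]; exact sum_halves_odd fo hfo_par
    have hEsum : 2 * E.sum = fe.sum := by
      rw [← hE]; exact sum_halves_even fe hfe_par
    have hsplit : fo.sum + fe.sum = (S 0 p.reverse).sum := by
      rw [← hfo, ← hfe, sum_filter_parity]
    have hSsum : (S 0 p.reverse).sum
        = 2 * r + (List.range (2 * m)).sum := by
      rw [S_sum, hq_sum, hq_len]; omega
    have hXi : (U 0 O).sum + m * 0 + (List.range m).sum = O.sum := by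
      rw [← hO_len]; exact U_sum O hO_sorted 0 (by simp)
    have hEta : (U 0 E).sum + m * 0 + (List.range m).sum = E.sum := by
      rw [← hE_len]; exact U_sum E hE_sorted 0 (by simp)
    have hg := range_sum_double m
    rw [hxiC, hetaC]
    omega
  -- part (ii) : head even
  have part2 : Even (l.headD 0) → Lp (xiC l) = l.headD 0 / 2 := by
    intro hev
    rw [hlam] at hev
    rw [hlam]
    have h1 : lam % 2 = 0 := Nat.even_iff.1 hev
    have hlast_odd : ((fun x => decide (x % 2 = 1)) ((S 0 p.reverse).getLastD 0)) = true := by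
      rw [hs_last]; simp; omega
    have hfo_last : fo.getLastD 0 = lam + (2 * m - 1) := by
      rw [← hfo, filter_last_true _ _ hs_ne hlast_odd, hs_last]
    have hO_last : O.getLastD 0 = (lam + (2 * m - 1)) / 2 := by
      have hfone : fo ≠ [] := by
        intro h; rw [h] at hfo_len; simp at hfo_len; omega
      rw [← hO, map_getLastD _ _ hfone, hfo_last]
    rw [hxiC]
    show (U 0 O).foldr max 0 = lam / 2
    rw [U_Lp O hO_sorted hO_ne 0, hO_last, hO_len]
    omega
  refine ⟨part1, ?_, part2, ?_⟩
  -- part (i) : head odd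
  · intro hod
    rw [hlam] at hod
    rw [hlam]
    have h1 : lam % 2 = 1 := Nat.odd_iff.1 hod
    have hlast_even : ((fun x => decide (x % 2 = 0)) ((S 0 p.reverse).getLastD 0)) = true := by
      rw [hs_last]; simp; omega
    have hfe_last : fe.getLastD 0 = lam + (2 * m - 1) := by
      rw [← hfe, filter_last_true _ _ hs_ne hlast_even, hs_last]
    have hE_last : E.getLastD 0 = (lam + (2 * m - 1)) / 2 := by
      have hfene : fe ≠ [] := by
        intro h; rw [h] at hfe_len; simp at hfe_len; omega
      rw [← hE, map_getLastD _ _ hfene, hfe_last]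
    rw [hetaC]
    show (U 0 E).foldr max 0 = (lam + 1) / 2
    rw [U_Lp E hE_sorted hE_ne 0, hE_last, hE_len]
    omega
  -- part (iii)
  · intro hev h2
    refine ⟨part2 hev, ?_⟩
    rw [hlam] at hev
    have h1 : lam % 2 = 0 := Nat.even_iff.1 hev
    -- l has at least two entries
    obtain ⟨a, t, rfl⟩ := List.exists_cons_of_ne_nil hlne
    have ha_pos : 0 < a := hpos a (by simp)
    cases t with
    | nil => simp at h2; omega
    | cons b t' =>
    have hb : b = a := by simpa using h2
    have hpX : ∃ X, p = a :: b :: X := by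
      rw [← hp_def, padEven]; split
      · exact ⟨t', rfl⟩
      · exact ⟨t' ++ [0], by simp⟩
    obtain ⟨X, hX⟩ := hpX
    have hp2 : p.getD 1 0 = a := by rw [hX]; simp [hb]
    have hhead : lam = a := by rw [← hlam]; rfl
    -- the dropLast of the reversed list
    have hqd_ne : p.reverse.dropLast ≠ [] := by
      rw [reverse_dropLast, hX]; simp
    have hqd_len : p.reverse.dropLast.length = 2 * m - 1 := by
      rw [List.length_dropLast, hq_len]
    have hqd_last : p.reverse.dropLast.getLastD 0 = a := by
      rw [reverse_dropLast, reverse_getLastD, tail_headD, hp2]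
    have hsd_ne : S 0 p.reverse.dropLast ≠ [] := by
      intro h
      have h5 := S_length 0 p.reverse.dropLast
      rw [h, hqd_len] at h5
      simp at h5
      omega
    have hsd_last : (S 0 p.reverse.dropLast).getLastD 0 = a + (2 * m - 2) := by
      rw [S_getLastD _ hqd_ne, hqd_last, hqd_len]; omega
    have hlast_odd : ((fun x => decide (x % 2 = 0)) ((S 0 p.reverse).getLastD 0)) = false := by
      rw [hs_last]; simp; omega
    have hfe_eq : (S 0 p.reverse).filter (fun x => x % 2 = 0)
        = (S 0 p.reverse.dropLast).filter (fun x => x % 2 = 0) := by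
      rw [filter_last_false _ _ hs_ne hlast_odd, S_dropLast]
    have hsd_even : ((fun x => decide (x % 2 = 0)) ((S 0 p.reverse.dropLast).getLastD 0)) = true := by
      rw [hsd_last]; simp; omega
    have hfe_last : fe.getLastD 0 = a + (2 * m - 2) := by
      rw [← hfe, hfe_eq, filter_last_true _ _ hsd_ne hsd_even, hsd_last]
    have hE_last : E.getLastD 0 = (a + (2 * m - 2)) / 2 := by
      have hfene : fe ≠ [] := by
        intro h; rw [h] at hfe_len; simp at hfe_len; omega
      rw [← hE, map_getLastD _ _ hfene, hfe_last]
    rw [hetaC, hlam]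
    show (U 0 E).foldr max 0 = lam / 2
    rw [U_Lp E hE_sorted hE_ne 0, hE_last, hE_len]
    rw [hhead] at h1
    rw [hhead]
    omega


end Stmt7
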